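/- For all integers ℓ,m,s ≥ 1, F_{(ℓ,m;s)} = (s−1)!/(ℓ+m+s−2)! · binom(ℓ+m−2, m−1). -/

import Mathlib

open scoped BigOperators

/-- A cell of the plane `ℤ²`. -/
abbrev Cell : Type := ℤ × ℤ

/-- The partial order `⊴` on `ℤ²`: `(a,b) ⊴ (a',b')` iff `a ≥ a'` and `b ≥ b'`. -/
def cellLE (u v : Cell) : Prop := v.1 ≤ u.1 ∧ v.2 ≤ u.2

/-- The cylinder `C_ω = ℤ²/ℤω`. -/
abbrev Cyl (ω : Cell) : Type := Cell ⧸ AddSubgroup.zmultiples ω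

/-- The natural projection `π : ℤ² → C_ω`. -/
def pr (ω : Cell) : Cell → Cyl ω := QuotientAddGroup.mk

/-- The induced relation `⊴` on the cylinder: `x ⊴ y` iff some lifts satisfy `x̃ ⊴ ỹ`. -/
def cylLE (ω : Cell) (x y : Cyl ω) : Prop :=
  ∃ u v : Cell, pr ω u = x ∧ pr ω v = y ∧ cellLE u v

/-- The hook of `x` in a diagram `Θ ⊆ ℤ²`. -/
def hookSet (Θ : Set Cell) (x : Cell) : Set Cell :=
  Θ ∩ ({y | ∃ k : ℤ, 0 ≤ k ∧ y = x + (k, 0)} ∪ {y | ∃ k : ℤ, 1 ≤ k ∧ y = x + (0, k)})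

/-- The hook length of `x` in `Θ`. -/
noncomputable def hookLen (Θ : Set Cell) (x : Cell) : ℕ := (hookSet Θ x).ncard

/-- The hook length of a cell of the cylinder, computed via a lift. -/
noncomputable def cylHook (ω : Cell) (Θ : Set Cell) (x : Cyl ω) : ℕ :=
  hookLen Θ (Quotient.out x)

/-- The `ℤω`-orbit of a cell. -/
def zline (ω y : Cell) : Set Cell := {z | ∃ k : ℤ, z = y + k • ω}

/-- `S + ℤω`. -/
def perClosure (ω : Cell) (S : Set Cell) : Set Cell := {z | ∃ y ∈ S, ∃ k : ℤ, z = y + k • ω}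

/-- Translation of a set of cells by `u`. -/
def shiftSet (u : Cell) (S : Set Cell) : Set Cell := (· + u) '' S

/-- The semi-infinite diagram `λ̄ = {(a,b) : 1 ≤ a ≤ m, b ≤ λ_a}`. -/
def lowerDiag (m : ℤ) (lam : ℤ → ℤ) : Set Cell := {p | 1 ≤ p.1 ∧ p.1 ≤ m ∧ p.2 ≤ lam p.1}

/-- The Young diagram `{(a,b) : 1 ≤ a ≤ m, 1 ≤ b ≤ λ_a}`. -/
def youngDiag (m : ℤ) (lam : ℤ → ℤ) : Set Cell :=
  {p | 1 ≤ p.1 ∧ p.1 ≤ m ∧ 1 ≤ p.2 ∧ p.2 ≤ lam p.1}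

/-- The skew diagram `λ/μ = {(a,b) : 1 ≤ a ≤ m, μ_a < b ≤ λ_a}`. -/
def skewDiag (m : ℤ) (lam mu : ℤ → ℤ) : Set Cell :=
  {p | 1 ≤ p.1 ∧ p.1 ≤ m ∧ mu p.1 < p.2 ∧ p.2 ≤ lam p.1}

/-- The periodic diagram `λ̃ = λ̄ + ℤ(m,−ℓ)`. -/
def perDiag (m l : ℤ) (lam : ℤ → ℤ) : Set Cell := perClosure (m, -l) (lowerDiag m lam)

/-- The cylindric diagram `λ̂ = π(λ̃)`. -/
def cylDiag (m l : ℤ) (lam : ℤ → ℤ) : Set (Cyl (m, -l)) := pr (m, -l) '' perDiag m l lam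

/-- `λ ∈ P_{m,ℓ}`: an `ℓ`-restricted generalized partition of length `m`
(only the values `λ_1, …, λ_m` are relevant). -/
def IsRestricted (m l : ℤ) (lam : ℤ → ℤ) : Prop :=
  (∀ a : ℤ, 1 ≤ a → a < m → lam (a + 1) ≤ lam a) ∧ lam 1 - lam m ≤ l

/-- `y` is a `D`-active cell (with ambient diagram `Θ`). -/
def IsActive (Θ D : Set Cell) (y : Cell) : Prop :=
  y ∈ D ∧ y + (1, 0) ∈ Θ \ D ∧ y + (0, 1) ∈ Θ \ D ∧ y + (1, 1) ∈ Θ \ D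

/-- One elementary excitation inside `Θ`. -/
def exciteStep (Θ D E : Set Cell) : Prop :=
  ∃ y, IsActive Θ D y ∧ E = (D \ {y}) ∪ {y + (1, 1)}

/-- The excited diagrams of `M` in `Θ`. -/
def ExcitedSet (Θ M : Set Cell) : Set (Set Cell) :=
  {D | Relation.ReflTransGen (exciteStep Θ) M D}

/-- One periodic elementary excitation inside `Θ`. -/
def pExciteStep (ω : Cell) (Θ D E : Set Cell) : Prop :=
  ∃ y, IsActive Θ D y ∧ E = (D \ zline ω y) ∪ zline ω (y + (1, 1))

/-- The periodic excited diagrams of `M` in `Θ`. -/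
def PExcitedSet (ω : Cell) (Θ M : Set Cell) : Set (Set Cell) :=
  {D | Relation.ReflTransGen (pExciteStep ω Θ) M D}

/-- The cylindric excited diagrams: images under `π` of the periodic excited diagrams. -/
def CylExcitedSet (ω : Cell) (Θ M : Set Cell) : Set (Set (Cyl ω)) :=
  (fun D => pr ω '' D) '' PExcitedSet ω Θ M

/-- A linear extension of `S` (with respect to a relation `R`): a bijection
`ε : S → {1,…,n}` with `ε x < ε y` whenever `R x y` and `x ≠ y`. -/
def IsLinExt {α : Type} (R : α → α → Prop) (S : Set α) (n : ℕ) (ε : S → Fin n) : Prop :=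
  Function.Bijective ε ∧ ∀ x y : S, R (x : α) (y : α) → (x : α) ≠ (y : α) → ε x < ε y

/-- The number of linear extensions of `S`. -/
noncomputable def linExtCount {α : Type} (R : α → α → Prop) (S : Set α) (n : ℕ) : ℕ :=
  Nat.card {ε : S → Fin n // IsLinExt R S n ε}

/-- A reverse standard tableau on a (skew) diagram `S` of `n` cells. -/
def IsRST (S : Set Cell) (n : ℕ) (ε : S → Fin n) : Prop :=
  Function.Bijective ε ∧
    (∀ x y : S, (y : Cell) = (x : Cell) + (0, 1) → ε y < ε x) ∧
    (∀ x y : S, (y : Cell) = (x : Cell) + (1, 0) → ε y < ε x)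

/-- An `ℓ`-restricted reverse standard tableau on a skew diagram of length `m`. -/
def IsRSTl (m l : ℤ) (S : Set Cell) (n : ℕ) (ε : S → Fin n) : Prop :=
  IsRST S n ε ∧
    ∀ x y : S, (x : Cell).1 = 1 → (y : Cell) = (m, (x : Cell).2 - l) → ε x < ε y

/-- One lattice step: right by `(1,0)` or down by `(0,−1)`. -/
def stepRel (a b : Cell) : Prop := b - a = (1, 0) ∨ b - a = (0, -1)

/-- `p` is (the list of cells of) a lattice path from `u` to `v`. -/
def IsLatticePathList (u v : Cell) (p : List Cell) : Prop :=
  p.head? = some u ∧ p.getLast? = some v ∧ p.Chain' stepRel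

/-- `L(u,v)`: lattice paths from `u` to `v`, identified with their underlying sets of cells. -/
def LPath (u v : Cell) : Set (Set Cell) :=
  {S | ∃ p : List Cell, IsLatticePathList u v p ∧ S = {x | x ∈ p}}

/-- `L_Θ(u,v)`: lattice paths from `u` to `v` contained in `Θ`. -/
def LPathIn (Θ : Set Cell) (u v : Cell) : Set (Set Cell) := {S | S ∈ LPath u v ∧ S ⊆ Θ}

/-- One lattice step on the cylinder. -/
def cylStep (ω : Cell) (x y : Cyl ω) : Prop :=
  ∃ u v : Cell, pr ω u = x ∧ pr ω v = y ∧ stepRel u v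

/-- `S` is a non-intersecting loop of length `n` in the cylinder. -/
def IsNILoop (ω : Cell) (n : ℕ) (S : Set (Cyl ω)) : Prop :=
  ∃ u : ZMod n → Cyl ω, Function.Injective u ∧ S = Set.range u ∧
    ∀ i : ZMod n, cylStep ω (u i) (u (i + 1))

/-- `h^{s,t}_{m,ℓ}(x) = ℓ+m−a−b+dt+s+1` where `x = (a, b−dℓ)` with `2 ≤ b ≤ ℓ+1`, `d ≥ 0`. -/
def hst (m l s t : ℤ) (x : Cell) : ℤ :=
  l + m - x.1 - x.2 + ((l + 1 - x.2) / l) * (t - l) + s + 1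

/-- The hook lengths `h_i` of the bar case: `h_{ℓt+j} = (ℓ+1)t+j = i + (i−1)/ℓ`. -/
def hbar (l i : ℤ) : ℤ := i + (i - 1) / l

/-- The finite sum `F_{(ℓ,m;s)} = Σ_{p ∈ L((1,ℓ+1),(m,2))} Π_{x ∈ p} 1/(h_{m,ℓ}(x)+s−1)`,
where `h_{m,ℓ}(a,b) = ℓ+m−a−b+2`. -/
noncomputable def Fσ (l m s : ℕ) : ℝ :=
  ∑ᶠ p ∈ LPath ((1 : ℤ), (l : ℤ) + 1) ((m : ℤ), 2),
    ∏ᶠ x ∈ p, (((l : ℝ) + (m : ℝ) - ((x.1 : ℤ) : ℝ) - ((x.2 : ℤ) : ℝ) + 2 + (s : ℝ) - 1))⁻¹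

lemma stepRel_iff (a b : Cell) :
    stepRel a b ↔ (b.1 = a.1 + 1 ∧ b.2 = a.2) ∨ (b.1 = a.1 ∧ b.2 = a.2 - 1) := by
  simp [stepRel, Prod.ext_iff, Prod.fst_sub, Prod.snd_sub]
  constructor <;> intro h <;> omega

lemma path_bounds : ∀ (p : List Cell) (u v x : Cell),
    IsLatticePathList u v p → x ∈ p →
    u.1 ≤ x.1 ∧ x.2 ≤ u.2 ∧ x.1 ≤ v.1 ∧ v.2 ≤ x.2 := by
  intro p
  induction p with
  | nil => intro u v x h hx; simp [IsLatticePathList] at h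
  | cons a t ih =>
    intro u v x h hx
    obtain ⟨h1, h2, h3⟩ := h
    simp only [List.head?_cons, Option.some.injEq] at h1
    subst h1
    cases t with
    | nil =>
      simp only [List.getLast?_singleton, Option.some.injEq] at h2
      subst h2
      simp at hx; subst hx; omega
    | cons b t' =>
      rw [List.Chain', List.isChain_cons_cons] at h3
      have hstep := (stepRel_iff a b).mp h3.1
      have hpath : IsLatticePathList b v (b :: t') :=
        ⟨rfl, by rwa [List.getLast?_cons_cons] at h2, h3.2⟩
      have hb := ih b v b hpath (List.mem_cons_self (a := b) (l := t'))
      rcases List.mem_cons.mp hx with hx | hx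
      · subst hx; omega
      · have := ih b v x hpath hx
        omega

lemma lpath_bounds {u v : Cell} {S : Set Cell} (hS : S ∈ LPath u v) :
    ∀ x ∈ S, u.1 ≤ x.1 ∧ x.2 ≤ u.2 ∧ x.1 ≤ v.1 ∧ v.2 ≤ x.2 := by
  obtain ⟨p, hp, rfl⟩ := hS
  intro x hx
  exact path_bounds p u v x hp hx

lemma lpath_mem_left {u v : Cell} {S : Set Cell} (hS : S ∈ LPath u v) : u ∈ S := by
  obtain ⟨p, hp, rfl⟩ := hS
  obtain ⟨h1, _, _⟩ := hp
  cases p with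
  | nil => simp at h1
  | cons a t => simp_all

lemma lpath_finite {u v : Cell} {S : Set Cell} (hS : S ∈ LPath u v) : S.Finite := by
  obtain ⟨p, _, rfl⟩ := hS
  exact p.finite_toSet

lemma lpath_subset_Icc {u v : Cell} {S : Set Cell} (hS : S ∈ LPath u v) :
    S ⊆ Set.Icc ((u.1, v.2) : Cell) (v.1, u.2) := by
  intro x hx
  have := lpath_bounds hS x hx
  simp [Prod.le_def]
  omega

lemma LPath_finite (u v : Cell) : (LPath u v).Finite := by
  apply Set.Finite.subset (Set.Finite.finite_subsets (Set.finite_Icc ((u.1, v.2) : Cell) (v.1, u.2)))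
  intro S hS
  exact lpath_subset_Icc hS

lemma LPath_empty {u v : Cell} (h : v.1 < u.1 ∨ u.2 < v.2) : LPath u v = ∅ := by
  ext S
  simp only [Set.mem_empty_iff_false, iff_false]
  intro hS
  have := lpath_bounds hS u (lpath_mem_left hS)
  omega

lemma LPath_self (u : Cell) : LPath u u = {{u}} := by
  ext S
  constructor
  · rintro hS
    obtain ⟨p, hp, rfl⟩ := hS
    obtain ⟨h1, h2, h3⟩ := hp
    cases p with
    | nil => simp at h1
    | cons a t =>
      simp only [List.head?_cons, Option.some.injEq] at h1; subst h1
      cases t with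
      | nil => simp
      | cons b t' =>
        rw [List.Chain', List.isChain_cons_cons] at h3
        have hstep := (stepRel_iff a b).mp h3.1
        have hpath : IsLatticePathList b a (b :: t') :=
          ⟨rfl, by rwa [List.getLast?_cons_cons] at h2, h3.2⟩
        have hb := path_bounds _ b a b hpath (List.mem_cons_self (a := b) (l := t'))
        omega
  · rintro rfl
    exact ⟨[u], ⟨rfl, rfl, List.isChain_singleton u⟩, by simp⟩

lemma LPath_decomp {u v : Cell} (h : u ≠ v) :
    LPath u v = insert u '' (LPath (u + (1, 0)) v ∪ LPath (u + (0, -1)) v) := by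
  ext S
  constructor
  · rintro ⟨p, ⟨h1, h2, h3⟩, rfl⟩
    cases p with
    | nil => simp at h1
    | cons a t =>
      simp only [List.head?_cons, Option.some.injEq] at h1; subst h1
      cases t with
      | nil =>
        simp only [List.getLast?_singleton, Option.some.injEq] at h2
        exact absurd h2 h
      | cons b t' =>
        rw [List.Chain', List.isChain_cons_cons] at h3
        have hpath : IsLatticePathList b v (b :: t') :=
          ⟨rfl, by rwa [List.getLast?_cons_cons] at h2, h3.2⟩
        refine ⟨{x | x ∈ b :: t'}, ?_, ?_⟩
        · rcases h3.1 with hs | hs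
          · left; exact ⟨b :: t', by rwa [sub_eq_iff_eq_add'.mp hs] at hpath ⊢, rfl⟩
          · right; exact ⟨b :: t', by rwa [sub_eq_iff_eq_add'.mp hs] at hpath ⊢, rfl⟩
        · ext x; simp
  · rintro ⟨T, hT, rfl⟩
    have : ∃ w, (stepRel u w) ∧ T ∈ LPath w v := by
      rcases hT with hT | hT
      · exact ⟨u + (1, 0), Or.inl (by simp [stepRel]), hT⟩
      · exact ⟨u + (0, -1), Or.inr (by simp [stepRel]), hT⟩
    obtain ⟨w, hw, q, ⟨h1, h2, h3⟩, rfl⟩ := this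
    cases q with
    | nil => simp at h1
    | cons b t' =>
      simp only [List.head?_cons, Option.some.injEq] at h1; subst h1
      refine ⟨u :: b :: t', ⟨rfl, by rwa [List.getLast?_cons_cons], List.isChain_cons_cons.mpr ⟨hw, h3⟩⟩, ?_⟩
      ext x; simp

lemma not_mem_right {u v : Cell} {S : Set Cell} (hS : S ∈ LPath (u + (1, 0)) v) : u ∉ S := by
  intro hu
  have := lpath_bounds hS u hu
  simp [Prod.fst_add, Prod.snd_add] at this

lemma not_mem_down {u v : Cell} {S : Set Cell} (hS : S ∈ LPath (u + (0, -1)) v) : u ∉ S := by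
  intro hu
  have := lpath_bounds hS u hu
  simp [Prod.fst_add, Prod.snd_add] at this

lemma lpath_disjoint (u v : Cell) :
    Disjoint (LPath (u + (1, 0)) v) (LPath (u + (0, -1)) v) := by
  rw [Set.disjoint_left]
  intro S hS hS'
  have h1 := lpath_bounds hS _ (lpath_mem_left hS')
  have h2 := lpath_mem_left hS'
  simp [Prod.fst_add, Prod.snd_add] at h1

lemma sum_recursion (f : Cell → ℝ) {u v : Cell} (h : u ≠ v) :
    ∑ᶠ S ∈ LPath u v, ∏ᶠ x ∈ S, f x =
      f u * ((∑ᶠ S ∈ LPath (u + (1, 0)) v, ∏ᶠ x ∈ S, f x) +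
        ∑ᶠ S ∈ LPath (u + (0, -1)) v, ∏ᶠ x ∈ S, f x) := by
  rw [LPath_decomp h]
  have hinj : Set.InjOn (insert u) (LPath (u + (1, 0)) v ∪ LPath (u + (0, -1)) v) := by
    intro S hS T hT hST
    have hu_: ∀ W ∈ LPath (u + (1, 0)) v ∪ LPath (u + (0, -1)) v, u ∉ W := by
      rintro W (hW | hW)
      · exact not_mem_right hW
      · exact not_mem_down hW
    have h1 := hu_ S hS
    have h2 := hu_ T hT
    have : insert u S \ {u} = insert u T \ {u} := by rw [hST]
    rwa [Set.insert_diff_self_of_notMem h1, Set.insert_diff_self_of_notMem h2] at this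
  rw [finsum_mem_image hinj]
  have hcong : ∀ S ∈ LPath (u + (1, 0)) v ∪ LPath (u + (0, -1)) v,
      ∏ᶠ x ∈ insert u S, f x = f u * ∏ᶠ x ∈ S, f x := by
    rintro S hS
    rcases hS with hS | hS
    · exact finprod_mem_insert f (not_mem_right hS) (lpath_finite hS)
    · exact finprod_mem_insert f (not_mem_down hS) (lpath_finite hS)
  have key : ∀ w : Cell, ∑ᶠ S ∈ LPath w v, f u * ∏ᶠ x ∈ S, f x
      = f u * ∑ᶠ S ∈ LPath w v, ∏ᶠ x ∈ S, f x := by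
    intro w
    rw [finsum_mem_eq_finite_toFinset_sum _ (LPath_finite w v), finsum_mem_eq_finite_toFinset_sum _ (LPath_finite w v),
      Finset.mul_sum]
  rw [finsum_mem_congr rfl hcong,
    finsum_mem_union (lpath_disjoint u v) (LPath_finite _ _) (LPath_finite _ _), key, key, mul_add]

noncomputable def G (p q a : ℕ) : ℝ :=
  (a.factorial : ℝ) / ((a + 1 + p + q).factorial : ℝ) * ((p + q).choose p : ℝ)

lemma factorial_cast_ne_zero (n : ℕ) : ((n.factorial : ℝ)) ≠ 0 :=
  Nat.cast_ne_zero.mpr (Nat.factorial_ne_zero n)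

lemma G00 (a : ℕ) : G 0 0 a = ((a : ℝ) + 1)⁻¹ := by
  unfold G
  rw [show a + 1 + 0 + 0 = a + 1 by ring, Nat.factorial_succ]
  push_cast
  have := factorial_cast_ne_zero a
  field_simp
  simp

lemma Gp0 (p a : ℕ) : G (p + 1) 0 a = ((a : ℝ) + 1 + ((p : ℝ) + 1))⁻¹ * G p 0 a := by
  unfold G
  rw [show a + 1 + (p + 1) + 0 = (a + 1 + p + 0) + 1 by ring, Nat.factorial_succ]
  simp only [Nat.add_zero, Nat.choose_self]
  push_cast
  have h1 := factorial_cast_ne_zero (a + 1 + p)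
  have h2 := factorial_cast_ne_zero a
  field_simp
  ring

lemma G0q (q a : ℕ) : G 0 (q + 1) a = ((a : ℝ) + 1)⁻¹ * G 0 q (a + 1) := by
  unfold G
  rw [show a + 1 + 0 + (q + 1) = (a + 1 + 0 + q) + 1 by ring,
    show (a + 1) + 1 + 0 + q = (a + 1 + 0 + q) + 1 by ring,
    Nat.factorial_succ (a), Nat.factorial_succ (a + 1 + 0 + q)]
  simp only [Nat.choose_zero_right]
  push_cast
  have h1 := factorial_cast_ne_zero (a + 1 + 0 + q)
  have h2 := factorial_cast_ne_zero a
  field_simp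

lemma Gpq (p q a : ℕ) : G (p + 1) (q + 1) a =
    ((a : ℝ) + 1 + ((p : ℝ) + 1))⁻¹ * (G p (q + 1) a + G (p + 1) q (a + 1)) := by
  unfold G
  have hA : (p + 1 + (q + 1)).choose (p + 1)
      = (p + q + 1).choose p + (p + q + 1).choose (p + 1) := by
    rw [show p + 1 + (q + 1) = (p + q + 1) + 1 by ring]
    exact Nat.choose_succ_succ' (p + q + 1) p
  have hABn : (p + q + 1).choose (p + 1) * (p + 1) = (p + q + 1).choose p * (q + 1) := by
    have := Nat.choose_succ_right_eq (p + q + 1) p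
    rwa [show p + q + 1 - p = q + 1 by omega] at this
  have hAB : ((p + q + 1).choose (p + 1) : ℝ) * ((p : ℝ) + 1)
      = ((p + q + 1).choose p : ℝ) * ((q : ℝ) + 1) := by
    exact_mod_cast congrArg (Nat.cast : ℕ → ℝ) hABn
  have hp1 : ((p : ℝ) + 1) ≠ 0 := by positivity
  have hB : ((p + q + 1).choose (p + 1) : ℝ)
      = ((p + q + 1).choose p : ℝ) * ((q : ℝ) + 1) / ((p : ℝ) + 1) := by
    field_simp
    linarith [hAB]
  rw [hA, show p + (q + 1) = p + q + 1 by ring, show p + 1 + q = p + q + 1 by ring,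
    show a + 1 + (p + 1) + (q + 1) = (a + 1 + p + (q + 1)) + 1 by ring,
    show (a + 1) + 1 + (p + 1) + q = (a + 1 + p + (q + 1)) + 1 by ring,
    Nat.factorial_succ (a + 1 + p + (q + 1)), Nat.factorial_succ a]
  push_cast
  rw [hB]
  have h1 := factorial_cast_ne_zero (a + 1 + p + (q + 1))
  have h2 := factorial_cast_ne_zero a
  field_simp
  ring

lemma toNat_cast_real {x : ℤ} (h : 0 ≤ x) : ((x.toNat : ℕ) : ℝ) = (x : ℝ) := by
  rw [← Int.cast_natCast, Int.toNat_of_nonneg h]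

lemma main_aux (c : ℤ) : ∀ n : ℕ, ∀ u v : Cell, u.1 ≤ v.1 → v.2 ≤ u.2 → v.1 + u.2 < c →
    (v.1 - u.1 + (u.2 - v.2)).toNat = n →
    ∑ᶠ S ∈ LPath u v, ∏ᶠ x ∈ S, ((c : ℝ) - x.1 - x.2)⁻¹
      = G (v.1 - u.1).toNat (u.2 - v.2).toNat (c - v.1 - u.2 - 1).toNat := by
  intro n
  induction n with
  | zero =>
    intro u v h1 h2 h3 hn
    have huv : u = v := by
      have := Prod.ext_iff.mpr (⟨?_, ?_⟩ : u.1 = v.1 ∧ u.2 = v.2)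
      · exact this
      · omega
      · omega
    subst huv
    rw [LPath_self u, finsum_mem_singleton, finprod_mem_singleton,
      show (u.1 - u.1).toNat = 0 by omega, show (u.2 - u.2).toNat = 0 by omega, G00]
    rw [toNat_cast_real (by omega)]
    push_cast
    congr 1
    ring
  | succ n ih =>
    intro u v h1 h2 h3 hn
    have hne : u ≠ v := by
      intro h; subst h; omega
    rw [sum_recursion _ hne]
    have hu1 : (u + ((1 : ℤ), (0 : ℤ))).1 = u.1 + 1 := rfl
    have hu2 : (u + ((1 : ℤ), (0 : ℤ))).2 = u.2 := by simp [Prod.snd_add]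
    have hd1 : (u + ((0 : ℤ), (-1 : ℤ))).1 = u.1 := by simp [Prod.fst_add]
    have hd2 : (u + ((0 : ℤ), (-1 : ℤ))).2 = u.2 - 1 := rfl
    have hfu : ((c : ℝ) - (u.1 : ℝ) - (u.2 : ℝ))⁻¹
        = (((c - v.1 - u.2 - 1).toNat : ℝ) + 1 + (((v.1 - u.1).toNat : ℝ)))⁻¹ := by
      rw [toNat_cast_real (by omega), toNat_cast_real (by omega)]
      congr 1
      push_cast
      ring
    rcases eq_or_lt_of_le h1 with heq | hlt1
    · -- u.1 = v.1, so q ≥ 1, right branch empty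
      have hq : v.2 < u.2 := by omega
      have hempty : LPath (u + ((1 : ℤ), (0 : ℤ))) v = ∅ :=
        LPath_empty (by rw [hu1]; omega)
      rw [hempty, finsum_mem_empty]
      have := ih (u + ((0 : ℤ), (-1 : ℤ))) v (by rw [hd1]; omega) (by rw [hd2]; omega)
        (by rw [hd2]; omega) (by rw [hd1, hd2]; omega)
      rw [this, hd1, hd2]
      rw [show (v.1 - u.1).toNat = 0 by omega,
        show (u.2 - v.2).toNat = (u.2 - 1 - v.2).toNat + 1 by omega,
        show (c - v.1 - (u.2 - 1) - 1).toNat = (c - v.1 - u.2 - 1).toNat + 1 by omega,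
        G0q]
      rw [zero_add, hfu, show (v.1 - u.1).toNat = 0 by omega]
      push_cast
      ring_nf
    · rcases eq_or_lt_of_le h2 with heq2 | hlt2
      · -- u.2 = v.2, p ≥ 1, down branch empty
        have hempty : LPath (u + ((0 : ℤ), (-1 : ℤ))) v = ∅ :=
          LPath_empty (by rw [hd2]; omega)
        rw [hempty, finsum_mem_empty]
        have := ih (u + ((1 : ℤ), (0 : ℤ))) v (by rw [hu1]; omega) (by rw [hu2]; omega)
          (by rw [hu2]; omega) (by rw [hu1, hu2]; omega)
        rw [this, hu1, hu2]
        rw [show (u.2 - v.2).toNat = 0 by omega,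
          show (v.1 - u.1).toNat = (v.1 - (u.1 + 1)).toNat + 1 by omega,
          Gp0]
        rw [add_zero, hfu,
          show (v.1 - u.1).toNat = (v.1 - (u.1 + 1)).toNat + 1 by omega]
        push_cast
        ring_nf
      · -- both strict
        have e1 := ih (u + ((1 : ℤ), (0 : ℤ))) v (by rw [hu1]; omega) (by rw [hu2]; omega)
          (by rw [hu2]; omega) (by rw [hu1, hu2]; omega)
        have e2 := ih (u + ((0 : ℤ), (-1 : ℤ))) v (by rw [hd1]; omega) (by rw [hd2]; omega)
          (by rw [hd2]; omega) (by rw [hd1, hd2]; omega)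
        rw [e1, e2, hu1, hu2, hd1, hd2]
        rw [show (v.1 - u.1).toNat = (v.1 - (u.1 + 1)).toNat + 1 by omega,
          show (u.2 - v.2).toNat = (u.2 - 1 - v.2).toNat + 1 by omega,
          show (c - v.1 - (u.2 - 1) - 1).toNat = (c - v.1 - u.2 - 1).toNat + 1 by omega,
          Gpq]
        rw [hfu, show (v.1 - u.1).toNat = (v.1 - (u.1 + 1)).toNat + 1 by omega]
        push_cast
        ring_nf

/-- **Lemma 7.6**: `F_{(ℓ,m;s)} = (s−1)!/(ℓ+m+s−2)! · C(ℓ+m−2, m−1)`. -/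
theorem F_lms_formula (l m s : ℕ) (hl : 1 ≤ l) (hm : 1 ≤ m) (hs : 1 ≤ s) :
    Fσ l m s =
      ((s - 1).factorial : ℝ) / ((l + m + s - 2).factorial : ℝ) *
        ((l + m - 2).choose (m - 1) : ℝ) := by
  have hc : Fσ l m s = ∑ᶠ S ∈ LPath ((1 : ℤ), (l : ℤ) + 1) ((m : ℤ), 2),
      ∏ᶠ x ∈ S, ((((l : ℤ) + m + s + 1 : ℤ) : ℝ) - x.1 - x.2)⁻¹ := by
    unfold Fσ
    apply finsum_mem_congr rfl
    intro S hS
    apply finprod_mem_congr rfl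
    intro x hx
    congr 1
    push_cast
    ring
  have hmain := main_aux ((l : ℤ) + m + s + 1)
    ((((m : ℤ), (2 : ℤ)).1 - ((1 : ℤ), (l : ℤ) + 1).1
      + (((1 : ℤ), (l : ℤ) + 1).2 - ((m : ℤ), (2 : ℤ)).2)).toNat)
    ((1 : ℤ), (l : ℤ) + 1) ((m : ℤ), 2)
    (by simp <;> omega) (by simp <;> omega) (by simp <;> omega) rfl
  rw [hc, hmain]
  have e1 : ((((m : ℤ), (2 : ℤ)).1 - ((1 : ℤ), (l : ℤ) + 1).1).toNat) = m - 1 := by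
    simp <;> omega
  have e2 : ((((1 : ℤ), (l : ℤ) + 1).2 - ((m : ℤ), (2 : ℤ)).2).toNat) = l - 1 := by
    simp <;> omega
  have e3 : ((((l : ℤ) + m + s + 1) - ((m : ℤ), (2 : ℤ)).1 - ((1 : ℤ), (l : ℤ) + 1).2 - 1).toNat)
      = s - 1 := by
    simp <;> omega
  rw [e1, e2, e3]
  unfold G
  rw [show s - 1 + 1 + (m - 1) + (l - 1) = l + m + s - 2 by omega,
    show m - 1 + (l - 1) = l + m - 2 by omega]
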